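/- For every odd integer ℓ ≥ 7, there exists a palindrome of length ℓ over the binary alphabet {0,1} whose critical exponent is exactly 7/3: it contains a factor of length p with period q satisfying p/q ≥ 7/3, but contains no factor of length p with period q satisfying p/q > 7/3. -/

import Mathlib

/-- A word `x` has period `q` (with `1 ≤ q ≤ |x|`) if `x[i] = x[i+q]`
whenever both indices are in range. -/
def HasPeriod {A : Type*} (x : List A) (q : ℕ) : Prop :=
  1 ≤ q ∧ q ≤ x.length ∧ ∀ i : ℕ, i + q < x.length → x[i]? = x[i + q]?

/-- `w` contains an `e`-power: a nonempty factor of length `p` with period `q`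
and `p/q ≥ e`. -/
def ContainsPowGe {A : Type*} (w : List A) (e : ℚ) : Prop :=
  ∃ x : List A, ∃ q : ℕ, x ≠ [] ∧ x <:+: w ∧ HasPeriod x q ∧
    e ≤ (x.length : ℚ) / (q : ℚ)

/-- `w` contains an `e⁺`-power: a nonempty factor of length `p` with period `q`
and `p/q > e`. -/
def ContainsPowGt {A : Type*} (w : List A) (e : ℚ) : Prop :=
  ∃ x : List A, ∃ q : ℕ, x ≠ [] ∧ x <:+: w ∧ HasPeriod x q ∧
    e < (x.length : ℚ) / (q : ℚ)

/-- The critical exponent of `w` is exactly `e`: some nonempty factor has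
exponent at least `e`, and no nonempty factor has exponent exceeding `e`. -/
def CritExpIs {A : Type*} (w : List A) (e : ℚ) : Prop :=
  ContainsPowGe w e ∧ ¬ ContainsPowGt w e

/-! ### The Thue–Morse sequence -/

/-- Fuel-based Thue–Morse: parity of binary digit sum. -/
def tbA : ℕ → ℕ → Bool
  | 0, _ => false
  | f+1, n => if n = 0 then false else ((n % 2 == 1).xor (tbA f (n/2)))

def tb (n : ℕ) : Bool := tbA n n

lemma tbA_zero (f : ℕ) : tbA f 0 = false := by
  cases f <;> simp [tbA]

lemma tbA_stable : ∀ n f g : ℕ, n ≤ f → n ≤ g → tbA f n = tbA g n := by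
  intro n
  induction n using Nat.strong_induction_on with
  | _ n IH =>
    intro f g hf hg
    cases n with
    | zero => rw [tbA_zero, tbA_zero]
    | succ k =>
      cases f with
      | zero => omega
      | succ f' =>
        cases g with
        | zero => omega
        | succ g' =>
          simp only [tbA, if_neg (Nat.succ_ne_zero k)]
          congr 1
          exact IH ((k+1)/2) (by omega) f' g' (by omega) (by omega)

lemma tb_rec (n : ℕ) (h : 1 ≤ n) : tb n = (n % 2 == 1).xor (tb (n/2)) := by
  cases n with
  | zero => omega
  | succ k =>
    show tbA (k+1) (k+1) = _
    simp only [tbA, if_neg (Nat.succ_ne_zero k)]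
    congr 1
    exact tbA_stable ((k+1)/2) k ((k+1)/2) (by omega) (by omega)

lemma tb_even (n : ℕ) : tb (2*n) = tb n := by
  cases n with
  | zero => rfl
  | succ k =>
    have h := tb_rec (2*(k+1)) (by omega)
    rw [show (2*(k+1)) % 2 = 0 from by omega, show (2*(k+1))/2 = k+1 from by omega] at h
    simpa using h

lemma tb_odd (n : ℕ) : tb (2*n+1) = !(tb n) := by
  have h := tb_rec (2*n+1) (by omega)
  rw [show (2*n+1) % 2 = 1 from by omega, show (2*n+1)/2 = n from by omega] at h
  simpa using h

/-- No three consecutive equal letters in Thue–Morse. -/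
lemma no3 (n : ℕ) : ¬ (tb n = tb (n+1) ∧ tb (n+1) = tb (n+2)) := by
  rcases Nat.even_or_odd n with ⟨a, ha⟩ | ⟨a, ha⟩
  · rintro ⟨h1, -⟩
    rw [show n = 2*a from by omega, show 2*a+1 = 2*a+1 from rfl] at h1
    rw [tb_even, tb_odd] at h1
    simp at h1
  · rintro ⟨-, h2⟩
    rw [show n+1 = 2*(a+1) from by omega, show n+2 = 2*(a+1)+1 from by omega] at h2
    rw [tb_even, tb_odd] at h2
    simp at h2

/-- Thue's theorem: the Thue–Morse word is overlap-free. -/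
theorem thue : ∀ q, 0 < q → ∀ i, ¬ (∀ j, j ≤ q → tb (i+j) = tb (i+j+q)) := by
  intro q
  induction q using Nat.strong_induction_on with
  | _ q IH =>
    intro hq i h
    rcases Nat.lt_or_ge q 2 with h2 | h2
    · -- q = 1
      have hq1 : q = 1 := by omega
      subst hq1
      refine no3 i ⟨?_, ?_⟩
      · have := h 0 (by omega); simpa using this
      · have := h 1 le_rfl
        rw [show i+1+1 = i+2 from by omega] at this
        exact this
    rcases Nat.even_or_odd q with ⟨r, hr⟩ | ⟨r, hr⟩
    · -- q = r + r, r ≥ 1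
      have hr1 : 0 < r := by omega
      rcases Nat.even_or_odd i with ⟨a, ha⟩ | ⟨a, ha⟩
      · refine IH r (by omega) hr1 a (fun j hj => ?_)
        have hh := h (2*j) (by omega)
        rw [show i + 2*j = 2*(a+j) from by omega,
            show 2*(a+j) + q = 2*(a+j+r) from by omega, tb_even, tb_even] at hh
        exact hh
      · refine IH r (by omega) hr1 a (fun j hj => ?_)
        have hh := h (2*j) (by omega)
        rw [show i + 2*j = 2*(a+j)+1 from by omega,
            show 2*(a+j)+1 + q = 2*(a+j+r)+1 from by omega, tb_odd, tb_odd] at hh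
        simpa using hh
    · -- q = 2r+1 with q ≥ 3, so r ≥ 1
      have hr1 : 1 ≤ r := by omega
      rcases Nat.even_or_odd i with ⟨a, ha⟩ | ⟨a, ha⟩
      · -- i = 2a : derive tb (c+r) = tb (c+r+1) for c = a, a+1
        have key : ∀ c, i ≤ 2*c → 2*c + 1 ≤ i + q → tb (c+r) = tb (c+r+1) := by
          intro c hc1 hc2
          have h1 := h (2*c - i) (by omega)
          have h2 := h (2*c - i + 1) (by omega)
          rw [show i + (2*c - i) = 2*c from by omega,
              show 2*c + q = 2*(c+r)+1 from by omega, tb_even, tb_odd] at h1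
          rw [show i + (2*c - i + 1) = 2*c+1 from by omega,
              show 2*c+1 + q = 2*(c+r+1) from by omega, tb_odd, tb_even] at h2
          cases hcb : tb c <;> cases hcr : tb (c+r) <;> cases hcr1 : tb (c+r+1) <;>
            simp_all
        refine no3 (a+r) ⟨key a (by omega) (by omega), ?_⟩
        have := key (a+1) (by omega) (by omega)
        rw [show a+1+r = a+r+1 from by omega, show a+r+1+1 = a+r+2 from by omega] at this
        exact this
      · -- i = 2a+1 : derive tb c = tb (c+1) for c = a, a+1
        have key : ∀ c, i ≤ 2*c+1 → 2*c + 2 ≤ i + q → tb c = tb (c+1) := by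
          intro c hc1 hc2
          have h1 := h (2*c+1 - i) (by omega)
          have h2 := h (2*c+2 - i) (by omega)
          rw [show i + (2*c+1 - i) = 2*c+1 from by omega,
              show 2*c+1 + q = 2*(c+r+1) from by omega, tb_odd, tb_even] at h1
          rw [show i + (2*c+2 - i) = 2*(c+1) from by omega,
              show 2*(c+1) + q = 2*(c+r+1)+1 from by omega, tb_even, tb_odd] at h2
          cases h0 : tb c <;> cases h3 : tb (c+1) <;> cases h4 : tb (c+r+1) <;>
            simp_all
        exact no3 a ⟨key a (by omega) (by omega), key (a+1) (by omega) (by omega)⟩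

/-! ### The palindromic word -/

/-- Letters of the word `reverse (u m) ++ [0,1,1,0,1,1,0] ++ u m`
where `u m` is the length-`m` prefix of the Thue–Morse tail `t[3:]`. -/
def wf (m i : ℕ) : Bool :=
  if i < m then tb (m+2-i) else if i ≤ m+6 then decide ((i-m) % 3 ≠ 0) else tb (i-m-4)

def wL (m : ℕ) : List (Fin 2) :=
  (List.range (2*m+7)).map (fun i => if wf m i then 1 else 0)

lemma wfL (m x : ℕ) (h : x < m) : wf m x = tb (m+2-x) := by
  unfold wf; rw [if_pos h]

lemma wfC (m j : ℕ) (hj : j ≤ 6) : wf m (m+j) = decide (j % 3 ≠ 0) := by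
  unfold wf
  rw [if_neg (by omega), if_pos (by omega), show m+j-m = j from by omega]

lemma wfR (m x : ℕ) (h : m+7 ≤ x) : wf m x = tb (x-m-4) := by
  unfold wf; rw [if_neg (by omega), if_neg (by omega)]

lemma finb_inj (a b : Bool) (h : (if a then (1 : Fin 2) else 0) = (if b then 1 else 0)) :
    a = b := by
  cases a <;> cases b <;> simp_all

/-! ### The finite central check -/

def gN : ℕ := 1640053792098224518122367768997

set_option maxRecDepth 10000 in
set_option maxHeartbeats 1000000 in
lemma gb_match : ∀ j, j < 101 → wf 47 j = Nat.testBit gN j := by decide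

set_option maxRecDepth 10000 in
set_option maxHeartbeats 4000000 in
lemma D : ∀ s, s < 102 → ∀ q, q < 44 → 1 ≤ q → s + (7*q/3+1) ≤ 101 →
    ∃ i, i < 7*q/3+1-q ∧ ¬ (Nat.testBit gN (s+i) = Nat.testBit gN (s+i+q)) := by decide

lemma FIN (s p q : ℕ) (hq1 : 1 ≤ q) (hsp : s + p ≤ 101) (h73 : 7*q < 3*p)
    (run : ∀ i, i + q < p → Nat.testBit gN (s+i) = Nat.testBit gN (s+i+q)) : False := by
  have hq44 : q < 44 := by omega
  have hpmin : 7*q/3+1 ≤ p := by omega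
  obtain ⟨i, hi, hne⟩ := D s (by omega) q hq44 hq1 (by omega)
  exact hne (run i (by omega))

/-! ### Reductions of repetitions to Thue's theorem or the finite check -/

lemma wf_shift (m pos j : ℕ) (h : pos + 47 = j + m) : wf m pos = wf 47 j := by
  unfold wf
  by_cases h1 : pos < m
  · rw [if_pos h1, if_pos (by omega : j < 47)]
    congr 1; omega
  · by_cases h2 : pos ≤ m+6
    · rw [if_neg h1, if_pos h2, if_neg (by omega : ¬ j < 47), if_pos (by omega : j ≤ 47+6)]
      rw [show pos - m = j - 47 from by omega]
    · rw [if_neg h1, if_neg h2, if_neg (by omega : ¬ j < 47), if_neg (by omega : ¬ j ≤ 47+6)]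
      congr 1; omega

lemma finite_case (m s p q : ℕ) (hq1 : 1 ≤ q) (h73 : 7*q < 3*p)
    (run : ∀ i, i + q < p → wf m (s+i) = wf m (s+i+q))
    (hs : m ≤ s + 47) (he : s + p ≤ m + 54) : False := by
  apply FIN (s + 47 - m) p q hq1 (by omega) h73
  intro i hi
  have h1 : wf m (s+i) = wf 47 (s+47-m+i) := wf_shift _ _ _ (by omega)
  have h2 : wf m (s+i+q) = wf 47 (s+47-m+i+q) := wf_shift _ _ _ (by omega)
  rw [← gb_match _ (by omega), ← gb_match _ (by omega), ← h1, ← h2]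
  exact run i hi

lemma right_overlap (m s p q d : ℕ) (hq1 : 0 < q)
    (run : ∀ i, i + q < p → wf m (s+i) = wf m (s+i+q))
    (h7 : m + 7 ≤ s + d) (hd : d + 2*q < p) : False := by
  apply thue q hq1 (s + d - m - 4)
  intro j hj
  have hh := run (d + j) (by omega)
  rw [wfR _ _ (by omega), wfR _ _ (by omega)] at hh
  convert hh using 2 <;> omega

lemma pure_left (m s p q : ℕ) (hq1 : 0 < q) (h2q : 2*q < p)
    (run : ∀ i, i + q < p → wf m (s+i) = wf m (s+i+q))
    (hend : s + p ≤ m) : False := by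
  apply thue q hq1 (m + 3 - s - p)
  intro j hj
  have hh := run (p-1-q-j) (by omega)
  rw [wfL _ _ (by omega), wfL _ _ (by omega)] at hh
  convert hh.symm using 2 <;> omega

lemma left_part (m s p q : ℕ) (hq1 : 0 < q)
    (run : ∀ i, i + q < p → wf m (s+i) = wf m (s+i+q))
    (hx : m + 1 ≤ s + p) (hbl : 2*q + 1 ≤ m - s) : False := by
  apply thue q hq1 3
  intro j hj
  have hh := run (m-1-s-q-j) (by omega)
  rw [wfL _ _ (by omega), wfL _ _ (by omega)] at hh
  convert hh.symm using 2 <;> omega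

lemma cross_right (m s p q : ℕ) (hq7 : 7 ≤ q)
    (run : ∀ i, i + q < p → wf m (s+i) = wf m (s+i+q))
    (hs : s ≤ m) (hra : m + q + 7 ≤ s + p) : False := by
  have key : ∀ j, j ≤ 6 → decide (j % 3 ≠ 0) = tb (q - 4 + j) := by
    intro j hj
    have hh := run (m + j - s) (by omega)
    rw [show s + (m + j - s) = m + j from by omega] at hh
    rw [wfC _ _ hj, wfR _ _ (by omega)] at hh
    rw [show m + j + q - m - 4 = q - 4 + j from by omega] at hh
    exact hh
  apply thue 3 (by norm_num) (q - 4)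
  intro j hj
  rw [show q - 4 + j + 3 = q - 4 + (j+3) from by omega,
      ← key j (by omega), ← key (j+3) (by omega)]
  interval_cases j <;> rfl

lemma cross_left (m s p q : ℕ) (hq7 : 7 ≤ q)
    (run : ∀ i, i + q < p → wf m (s+i) = wf m (s+i+q))
    (hla : s + q ≤ m) (hx : m + 7 ≤ s + p) : False := by
  have key : ∀ j, j ≤ 6 → tb (q + 2 - j) = decide (j % 3 ≠ 0) := by
    intro j hj
    have hh := run (m + j - q - s) (by omega)
    rw [show s + (m + j - q - s) = m + j - q from by omega] at hh
    rw [show m + j - q + q = m + j from by omega] at hh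
    rw [wfL _ _ (by omega), wfC _ _ hj] at hh
    rw [show m+2 - (m + j - q) = q + 2 - j from by omega] at hh
    exact hh
  apply thue 3 (by norm_num) (q - 4)
  intro j hj
  rw [show q - 4 + j = q + 2 - (6 - j) from by omega,
      show q + 2 - (6 - j) + 3 = q + 2 - (3 - j) from by omega,
      key (6-j) (by omega), key (3-j) (by omega)]
  interval_cases j <;> rfl

/-! ### No 7/3⁺-power -/

theorem noPowGt (m : ℕ) : ¬ ContainsPowGt (wL m) (7/3) := by
  rintro ⟨x, q, hne, ⟨pre, suf, heq⟩, ⟨hq1, hqx, hper⟩, hgt⟩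
  set s := pre.length with hs
  set p := x.length with hp
  have hlen : s + p + suf.length = 2*m+7 := by
    have h0 := congrArg List.length heq
    simp [wL] at h0
    omega
  have hsp : s + p ≤ 2*m+7 := by omega
  have hp1 : 1 ≤ p := List.length_pos_iff.mpr hne
  have h73 : 7*q < 3*p := by
    have hq0 : (0:ℚ) < (q:ℚ) := by exact_mod_cast hq1
    rw [div_lt_div_iff₀ (by norm_num) hq0] at hgt
    have : ((7*q : ℕ) : ℚ) < ((3*p : ℕ) : ℚ) := by push_cast; linarith
    exact_mod_cast this
  have hxw : ∀ k, k < p → x[k]? = some (if wf m (s+k) then (1 : Fin 2) else 0) := by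
    intro k hk
    have h1 : (pre ++ x ++ suf)[s+k]? = (pre ++ x)[s+k]? := by
      rw [List.getElem?_append_left (by simp [← hp]; omega)]
    have h2 : (pre ++ x)[s+k]? = x[k]? := by
      rw [List.getElem?_append_right (by omega), show s + k - pre.length = k from by omega]
    have h3 : (pre ++ x ++ suf)[s+k]? = (wL m)[s+k]? := by rw [heq]
    have h4 : (wL m)[s+k]? = some (if wf m (s+k) then (1 : Fin 2) else 0) := by
      unfold wL
      rw [List.getElem?_map, List.getElem?_range (by omega)]
      rfl
    rw [← h2, ← h1, h3, h4]
  have run : ∀ i, i + q < p → wf m (s+i) = wf m (s+i+q) := by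
    intro i hi
    have hh := hper i (by omega)
    rw [hxw i (by omega), hxw (i+q) (by omega)] at hh
    have := finb_inj _ _ (Option.some.inj hh)
    rw [show s + (i+q) = s+i+q from by omega] at this
    exact this
  by_cases hA : m + 7 ≤ s
  · exact right_overlap m s p q 0 (by omega) run (by omega) (by omega)
  by_cases hB : s + p ≤ m
  · exact pure_left m s p q (by omega) (by omega) run hB
  by_cases hC1 : m ≤ s
  · by_cases hbig : m + 2*q + 8 ≤ s + p
    · exact right_overlap m s p q (m+7-s) (by omega) run (by omega) (by omega)
    · exact finite_case m s p q hq1 h73 run (by omega) (by omega)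
  by_cases hC2 : s + p ≤ m + 7
  · by_cases hbigL : 2*q + 1 ≤ m - s
    · exact left_part m s p q (by omega) run (by omega) hbigL
    · exact finite_case m s p q hq1 h73 run (by omega) (by omega)
  by_cases hbL : 2*q + 1 ≤ m - s
  · exact left_part m s p q (by omega) run (by omega) hbL
  by_cases hbR : m + 2*q + 8 ≤ s + p
  · exact right_overlap m s p q (m+7-s) (by omega) run (by omega) (by omega)
  by_cases hq7 : 7 ≤ q
  · by_cases hra : m + q + 7 ≤ s + p
    · exact cross_right m s p q hq7 run (by omega) hra
    · by_cases hla : s + q ≤ m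
      · exact cross_left m s p q hq7 run hla (by omega)
      · exact finite_case m s p q hq1 h73 run (by omega) (by omega)
  · exact finite_case m s p q hq1 h73 run (by omega) (by omega)

/-! ### The positive part -/

def cl : List (Fin 2) := [0,1,1,0,1,1,0]

lemma wL_length (m : ℕ) : (wL m).length = 2*m+7 := by simp [wL]

lemma cl_eq (m : ℕ) : ((wL m).drop m).take 7 = cl := by
  apply List.ext_getElem
  · simp [wL, cl]; omega
  · intro i h1 h2
    have hi : i < 7 := by simpa [wL, cl] using h2
    rw [List.getElem_take, List.getElem_drop]
    unfold wL
    rw [List.getElem_map, List.getElem_range]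
    have : wf m (m+i) = decide (i % 3 ≠ 0) := wfC m i (by omega)
    rw [this]
    interval_cases i <;> rfl

lemma powGe (m : ℕ) : ContainsPowGe (wL m) (7/3) := by
  refine ⟨cl, 3, by simp [cl], ?_, ⟨by norm_num, by norm_num [cl], ?_⟩, ?_⟩
  · rw [← cl_eq m]
    exact ((List.take_prefix _ _).isInfix).trans ((List.drop_suffix _ _).isInfix)
  · intro i hi
    have h4 : i < 4 := by simp [cl] at hi; omega
    interval_cases i <;> rfl
  · norm_num [cl]

lemma wf_symm (m i : ℕ) (hi : i < 2*m+7) : wf m (2*m+6-i) = wf m i := by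
  by_cases c1 : i < m
  · rw [wfR _ _ (by omega), wfL _ _ c1]
    congr 1; omega
  · by_cases c2 : i ≤ m+6
    · have e1 : wf m i = decide ((i-m) % 3 ≠ 0) := by
        rw [← wfC m (i-m) (by omega)]; congr 1; omega
      have e2 : wf m (2*m+6-i) = decide ((m+6-i) % 3 ≠ 0) := by
        rw [← wfC m (m+6-i) (by omega)]; congr 1; omega
      rw [e1, e2]
      have h6 : i - m ≤ 6 := by omega
      have h7 : m + 6 - i = 6 - (i - m) := by omega
      rw [h7]
      generalize i - m = j at h6 ⊢
      interval_cases j <;> rfl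
    · rw [wfL _ _ (by omega), wfR _ _ (by omega)]
      congr 1; omega

lemma wL_palindrome (m : ℕ) : (wL m).reverse = wL m := by
  apply List.ext_getElem
  · simp
  · intro i h1 h2
    rw [List.getElem_reverse]
    unfold wL
    simp only [List.getElem_map, List.getElem_range, List.length_map, List.length_range]
    have hi : i < 2*m+7 := by simpa [wL] using h2
    rw [show 2*m+7 - 1 - i = 2*m+6-i from by omega]
    rw [wf_symm m i hi]
    show _ = (List.map (fun i => if wf m i = true then (1 : Fin 2) else 0) (List.range (2 * m + 7)))[i]'(by simp; omega)
    simp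

theorem exists_odd_binary_palindrome_critexp_73 (ℓ : ℕ)
    (hodd : Odd ℓ) (hlen : 7 ≤ ℓ) :
    ∃ w : List (Fin 2), w.length = ℓ ∧ w.reverse = w ∧
      ContainsPowGe w (7 / 3) ∧ ¬ ContainsPowGt w (7 / 3) := by
  have h2 : ℓ % 2 = 1 := Nat.odd_iff.mp hodd
  obtain ⟨m, rfl⟩ : ∃ m, ℓ = 2*m+7 := ⟨(ℓ-7)/2, by omega⟩
  exact ⟨wL m, wL_length m, wL_palindrome m, powGe m, noPowGt m⟩
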